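/- In the graph RA_{k,P}(S_a, S_b), if 0 ≤ i ≤ k−1 is such that S_a(i) = 1 and S_b(i) = 1, then d(ℓ′_i, v) ≤ 4P + 1 for every vertex v ∈ V_b. -/

import Mathlib

/-!
Statement 14: In the graph `RA_{k,P}(S_a, S_b)`, if `0 ≤ i ≤ k−1` is such
that `S_a(i) = 1` and `S_b(i) = 1`, then `d(ℓ′_i, v) ≤ 4P + 1` for every
vertex `v ∈ V_b`.
-/

/-- Generic graph built from "hub" vertices and "segments": each segment `s`
is a path with `len s` edges between the two hubs `ends s`, whose
`len s - 1` internal vertices are the pairs `⟨s, t⟩`.  A segment of length 1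
is just an edge between its two endpoints. -/
def segGraph {Hub Seg : Type} (ends : Seg → Hub × Hub) (len : Seg → ℕ) :
    SimpleGraph (Hub ⊕ (s : Seg) × Fin (len s - 1)) :=
  SimpleGraph.fromRel fun u v =>
    match u, v with
    | Sum.inl x, Sum.inl y => ∃ s, len s = 1 ∧ ends s = (x, y)
    | Sum.inl x, Sum.inr ⟨s, t⟩ =>
        ((ends s).1 = x ∧ (t : ℕ) = 0) ∨ ((ends s).2 = x ∧ (t : ℕ) + 2 = len s)
    | Sum.inr ⟨s, t⟩, Sum.inl x =>
        ((ends s).1 = x ∧ (t : ℕ) = 0) ∨ ((ends s).2 = x ∧ (t : ℕ) + 2 = len s)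
    | Sum.inr ⟨s, t⟩, Sum.inr ⟨s', t'⟩ =>
        s = s' ∧ ((t : ℕ) + 1 = (t' : ℕ) ∨ (t' : ℕ) + 1 = (t : ℕ))

section Generic

variable {Hub Seg : Type} (ends : Seg → Hub × Hub) (len : Seg → ℕ)

def Conn {V : Type*} (G : SimpleGraph V) (u v : V) (n : ℕ) : Prop :=
  ∃ w : G.Walk u v, w.length ≤ n

lemma Conn.trans {V : Type*} {G : SimpleGraph V} {u v w : V} {a b : ℕ}
    (h1 : Conn G u v a) (h2 : Conn G v w b) : Conn G u w (a + b) := by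
  obtain ⟨w1, hw1⟩ := h1; obtain ⟨w2, hw2⟩ := h2
  exact ⟨w1.append w2, by simp only [SimpleGraph.Walk.length_append]; omega⟩

lemma Conn.symm {V : Type*} {G : SimpleGraph V} {u v : V} {a : ℕ}
    (h : Conn G u v a) : Conn G v u a := by
  obtain ⟨w, hw⟩ := h; exact ⟨w.reverse, by simpa⟩

lemma Conn.of_le {V : Type*} {G : SimpleGraph V} {u v : V} {a b : ℕ}
    (h : Conn G u v a) (hab : a ≤ b) : Conn G u v b := by
  obtain ⟨w, hw⟩ := h; exact ⟨w, le_trans hw hab⟩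

lemma Conn.dist_le {V : Type*} {G : SimpleGraph V} {u v : V} {n : ℕ}
    (h : Conn G u v n) : G.dist u v ≤ n := by
  obtain ⟨w, hw⟩ := h; exact le_trans (SimpleGraph.dist_le w) hw

def segVert (s : Seg) (p : ℕ) : Hub ⊕ (s : Seg) × Fin (len s - 1) :=
  if h : 0 < p ∧ p < len s then Sum.inr ⟨s, ⟨p - 1, by omega⟩⟩
  else if p = 0 then Sum.inl (ends s).1 else Sum.inl (ends s).2

lemma segVert_zero (s : Seg) : segVert ends len s 0 = Sum.inl (ends s).1 := by
  simp [segVert]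

lemma segVert_len (s : Seg) (h : 1 ≤ len s) :
    segVert ends len s (len s) = Sum.inl (ends s).2 := by
  unfold segVert
  rw [dif_neg (by omega), if_neg (by omega)]

lemma segVert_mid (s : Seg) (t : Fin (len s - 1)) :
    segVert ends len s ((t : ℕ) + 1) = Sum.inr ⟨s, t⟩ := by
  have ht := t.2
  unfold segVert
  rw [dif_pos ⟨by omega, by omega⟩]
  congr 1

lemma segVert_adj (s : Seg) (hne : len s = 1 → (ends s).1 ≠ (ends s).2)
    (p : ℕ) (hp : p + 1 ≤ len s) :
    (segGraph ends len).Adj (segVert ends len s p) (segVert ends len s (p + 1)) := by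
  rw [segGraph, SimpleGraph.fromRel_adj]
  by_cases h0 : p = 0
  · subst h0
    by_cases h1 : len s = 1
    · have hend : segVert ends len s (0 + 1) = Sum.inl (ends s).2 := by
        rw [show (0:ℕ) + 1 = len s from h1.symm]; exact segVert_len ends len s (by omega)
      rw [segVert_zero, hend]
      exact ⟨by simpa using hne h1, Or.inl ⟨s, h1, rfl⟩⟩
    · have : segVert ends len s (0 + 1) = Sum.inr ⟨s, ⟨0, by omega⟩⟩ :=
        segVert_mid ends len s ⟨0, by omega⟩
      rw [segVert_zero, this]
      exact ⟨by simp, Or.inl (Or.inl ⟨rfl, rfl⟩)⟩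
  · have hmid : segVert ends len s p = Sum.inr ⟨s, ⟨p - 1, by omega⟩⟩ := by
      have := segVert_mid ends len s ⟨p - 1, by omega⟩
      simpa [Nat.sub_add_cancel (by omega : 1 ≤ p)] using this
    by_cases h1 : p + 1 = len s
    · have hend : segVert ends len s (p + 1) = Sum.inl (ends s).2 := by
        rw [h1]; exact segVert_len ends len s (by omega)
      rw [hmid, hend]
      exact ⟨by simp, Or.inl (Or.inr ⟨rfl, by simp; omega⟩)⟩
    · rw [hmid, segVert_mid ends len s ⟨p, by omega⟩]
      refine ⟨by simp [Fin.ext_iff]; omega, Or.inl ⟨rfl, Or.inl (by simp; omega)⟩⟩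

lemma conn_aux (s : Seg) (hne : len s = 1 → (ends s).1 ≠ (ends s).2) :
    ∀ (d p : ℕ), p + d ≤ len s →
      Conn (segGraph ends len) (segVert ends len s p) (segVert ends len s (p + d)) d := by
  intro d
  induction d with
  | zero => intro p _; exact ⟨SimpleGraph.Walk.nil, by simp⟩
  | succ d ih =>
    intro p hp
    obtain ⟨w, hw⟩ := ih (p + 1) (by omega)
    refine ⟨SimpleGraph.Walk.cons (segVert_adj ends len s hne p (by omega))
      (w.copy rfl (congrArg (segVert ends len s) (by omega))), ?_⟩
    simp only [SimpleGraph.Walk.length_cons, SimpleGraph.Walk.length_copy]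
    omega

lemma conn_ends (s : Seg) (hne : len s = 1 → (ends s).1 ≠ (ends s).2) (h1 : 1 ≤ len s) :
    Conn (segGraph ends len) (Sum.inl (ends s).1) (Sum.inl (ends s).2) (len s) := by
  have := conn_aux ends len s hne (len s) 0 (by omega)
  rwa [zero_add, segVert_zero, segVert_len ends len s (by omega)] at this

lemma conn_fst_internal (s : Seg) (hne : len s = 1 → (ends s).1 ≠ (ends s).2)
    (t : Fin (len s - 1)) :
    Conn (segGraph ends len) (Sum.inl (ends s).1) (Sum.inr ⟨s, t⟩) ((t : ℕ) + 1) := by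
  have ht := t.2
  have := conn_aux ends len s hne ((t : ℕ) + 1) 0 (by omega)
  rwa [zero_add, segVert_zero, segVert_mid] at this

lemma conn_snd_internal (s : Seg) (hne : len s = 1 → (ends s).1 ≠ (ends s).2)
    (t : Fin (len s - 1)) :
    Conn (segGraph ends len) (Sum.inl (ends s).2) (Sum.inr ⟨s, t⟩) (len s - 1 - (t : ℕ)) := by
  have ht := t.2
  have h := conn_aux ends len s hne (len s - 1 - (t : ℕ)) ((t : ℕ) + 1) (by omega)
  rw [show (t : ℕ) + 1 + (len s - 1 - (t : ℕ)) = len s by omega, segVert_mid, segVert_len ends len s (by omega)] at h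
  exact h.symm

end Generic

namespace RadApprox

/-- Hub vertices of `RA_{k,P}(S_a,S_b)`: two copies (indexed by `Bool`) of the
distinguished vertices of `G′`, together with the shared vertices `ℓ′_i`. -/
inductive Hub (m : ℕ) : Type
  | L : Bool → Fin (2 ^ m) → Hub m
  | R : Bool → Fin (2 ^ m) → Hub m
  | R' : Bool → Fin (2 ^ m) → Hub m
  | lk : Bool → Hub m
  | lk1 : Bool → Hub m
  | rk : Bool → Hub m
  | rk1 : Bool → Hub m
  | F : Bool → Fin m → Hub m
  | T : Bool → Fin m → Hub m
  | F' : Bool → Fin m → Hub m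
  | T' : Bool → Fin m → Hub m
  | L' : Fin (2 ^ m) → Hub m

/-- Segments (paths between hubs) of `RA_{k,P}(S_a,S_b)`; the first `Bool`
argument selects the copy of `G′`. -/
inductive Seg (m : ℕ) (Sa Sb : Fin (2 ^ m) → Bool) : Type
  | Llk : Bool → Fin (2 ^ m) → Seg m Sa Sb             -- ℓ_i – ℓ_k, length P
  | Rrk : Bool → Fin (2 ^ m) → Seg m Sa Sb             -- r_i – r_k, length P
  | lklk1 : Bool → Seg m Sa Sb                          -- ℓ_k – ℓ_{k+1}, length 2P
  | rkrk1 : Bool → Seg m Sa Sb                          -- r_k – r_{k+1}, length 2P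
  | lk1rk1 : Bool → Seg m Sa Sb                         -- edge ℓ_{k+1} – r_{k+1}
  | Lbit : Bool → Fin (2 ^ m) → Fin m → Seg m Sa Sb    -- ℓ_i – (f_j or t_j), length P
  | Rbit : Bool → Fin (2 ^ m) → Fin m → Seg m Sa Sb    -- r_i – (f'_j or t'_j), length P
  | FT' : Bool → Fin m → Seg m Sa Sb                   -- edge f_j – t'_j
  | TF' : Bool → Fin m → Seg m Sa Sb                   -- edge t_j – f'_j
  | R'R : Bool → Fin (2 ^ m) → Seg m Sa Sb             -- r'_i – r_i, length P
  | L'L : Bool → Fin (2 ^ m) → Seg m Sa Sb             -- ℓ'_i – ℓ_{(i,c)}, length P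
  | Slk1 : Bool → (i : Fin (2 ^ m)) → Sa i = true → Seg m Sa Sb
      -- ℓ_{(i,c)} – ℓ_{(k+1,c)}, length P (present iff S_a(i) = 1)
  | Srk1 : Bool → (i : Fin (2 ^ m)) → Sb i = true → Seg m Sa Sb
      -- r_{(i,c)} – r_{(k+1,c)}, length P (present iff S_b(i) = 1)

open Hub Seg

/-- Endpoints of each segment. -/
def ends (m : ℕ) (Sa Sb : Fin (2 ^ m) → Bool) : Seg m Sa Sb → Hub m × Hub m
  | Llk c i => (L c i, lk c)
  | Rrk c i => (R c i, rk c)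
  | lklk1 c => (lk c, lk1 c)
  | rkrk1 c => (rk c, rk1 c)
  | lk1rk1 c => (lk1 c, rk1 c)
  | Lbit c i j => (L c i, if Nat.testBit i.val j.val then T c j else F c j)
  | Rbit c i j => (R c i, if Nat.testBit i.val j.val then T' c j else F' c j)
  | FT' c j => (F c j, T' c j)
  | TF' c j => (T c j, F' c j)
  | R'R c i => (R' c i, R c i)
  | L'L c i => (L' i, L c i)
  | Slk1 c i _ => (L c i, lk1 c)
  | Srk1 c i _ => (R c i, rk1 c)

/-- Length of each segment. -/
def len (m P : ℕ) (Sa Sb : Fin (2 ^ m) → Bool) : Seg m Sa Sb → ℕ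
  | lk1rk1 _ => 1
  | FT' _ _ => 1
  | TF' _ _ => 1
  | lklk1 _ => 2 * P
  | rkrk1 _ => 2 * P
  | _ => P

/-- Vertices of `RA_{k,P}(S_a,S_b)`. -/
abbrev V (m P : ℕ) (Sa Sb : Fin (2 ^ m) → Bool) : Type :=
  Hub m ⊕ (s : Seg m Sa Sb) × Fin (len m P Sa Sb s - 1)

/-- The graph `RA_{k,P}(S_a, S_b)`. -/
def RA (m P : ℕ) (Sa Sb : Fin (2 ^ m) → Bool) : SimpleGraph (V m P Sa Sb) :=
  segGraph (ends m Sa Sb) (len m P Sa Sb)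

/-- Membership in `V_b`: both copies of `R ∪ R′ ∪ F′ ∪ T′ ∪ {r_k, r_{k+1}}`
and all internal vertices of paths joining two such vertices. -/
def inVb {m P : ℕ} {Sa Sb : Fin (2 ^ m) → Bool} : V m P Sa Sb → Prop
  | Sum.inl (R _ _) => True
  | Sum.inl (R' _ _) => True
  | Sum.inl (F' _ _) => True
  | Sum.inl (T' _ _) => True
  | Sum.inl (rk _) => True
  | Sum.inl (rk1 _) => True
  | Sum.inr ⟨Rrk _ _, _⟩ => True
  | Sum.inr ⟨rkrk1 _, _⟩ => True
  | Sum.inr ⟨Rbit _ _ _, _⟩ => True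
  | Sum.inr ⟨R'R _ _, _⟩ => True
  | Sum.inr ⟨Srk1 _ _ _, _⟩ => True
  | _ => False

theorem statement14 (m P : ℕ) (hm : 1 ≤ m) (hP : 1 ≤ P)
    (Sa Sb : Fin (2 ^ m) → Bool) (i : Fin (2 ^ m))
    (ha : Sa i = true) (hb : Sb i = true) :
    ∀ v : V m P Sa Sb, inVb v →
      (RA m P Sa Sb).dist (Sum.inl (L' i)) v ≤ 4 * P + 1 := by
  have hne : ∀ s : Seg m Sa Sb, len m P Sa Sb s = 1 →
      (ends m Sa Sb s).1 ≠ (ends m Sa Sb s).2 := by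
    intro s
    cases s <;> simp [ends, len] <;> intros <;> split <;> simp
  set G := RA m P Sa Sb with hG
  set l : V m P Sa Sb := Sum.inl (L' i) with hl
  have hdiff : ∀ i' : Fin (2 ^ m), i' ≠ i →
      ∃ j : Fin m, Nat.testBit i'.val j.val ≠ Nat.testBit i.val j.val := by
    intro i' hii
    by_contra hc
    push_neg at hc
    refine hii (Fin.ext (Nat.eq_of_testBit_eq fun j => ?_))
    by_cases hj : j < m
    · exact hc ⟨j, hj⟩
    · have h1 : i'.val < 2 ^ j :=
        lt_of_lt_of_le i'.2 (Nat.pow_le_pow_right (by norm_num) (by omega))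
      have h2 : i.val < 2 ^ j :=
        lt_of_lt_of_le i.2 (Nat.pow_le_pow_right (by norm_num) (by omega))
      rw [Nat.testBit_lt_two_pow h1, Nat.testBit_lt_two_pow h2]
  have cL : ∀ c, Conn G l (Sum.inl (L c i)) P := fun c =>
    conn_ends _ _ (Seg.L'L c i) (hne _) hP
  have cLk1 : ∀ c, Conn G l (Sum.inl (lk1 c)) (P + P) := fun c =>
    (cL c).trans (conn_ends _ _ (Seg.Slk1 c i ha) (hne _) hP)
  have cRk1 : ∀ c, Conn G l (Sum.inl (rk1 c)) (P + P + 1) := fun c =>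
    (cLk1 c).trans (conn_ends _ _ (Seg.lk1rk1 c) (hne _) le_rfl)
  have cRk : ∀ c, Conn G l (Sum.inl (rk c)) (P + P + 1 + 2 * P) := fun c =>
    (cRk1 c).trans ((conn_ends _ _ (Seg.rkrk1 c) (hne _)
      (show 1 ≤ 2 * P by omega)).symm)
  have cRi : ∀ c, Conn G l (Sum.inl (R c i)) (P + P + 1 + P) := fun c =>
    (cRk1 c).trans ((conn_ends _ _ (Seg.Srk1 c i hb) (hne _) hP).symm)
  have cR : ∀ c i', Conn G l (Sum.inl (R c i')) (3 * P + 1) := by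
    intro c i'
    by_cases hii : i' = i
    · subst hii; exact (cRi c).of_le (by omega)
    · obtain ⟨j, hbit⟩ := hdiff i' hii
      cases hbi : Nat.testBit i.val j.val with
      | true =>
        rw [hbi] at hbit
        have hbi' : Nat.testBit i'.val j.val = false := by simpa using hbit
        have h1 : Conn G (Sum.inl (L c i)) (Sum.inl (T c j)) P := by
          have := (conn_ends _ _ (Seg.Lbit c i j) (hne _) hP); rw [show ends m Sa Sb (Seg.Lbit c i j) = (L c i, T c j) by simp [ends, hbi]] at this; exact this
        have h2 : Conn G (Sum.inl (T c j)) (Sum.inl (F' c j)) 1 :=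
          conn_ends _ _ (Seg.TF' c j) (hne _) le_rfl
        have h3 : Conn G (Sum.inl (F' c j)) (Sum.inl (R c i')) P := by
          have := (conn_ends _ _ (Seg.Rbit c i' j) (hne _) hP).symm; rw [show ends m Sa Sb (Seg.Rbit c i' j) = (R c i', F' c j) by simp [ends, hbi']] at this; exact this
        exact ((((cL c).trans h1).trans h2).trans h3).of_le (by omega)
      | false =>
        rw [hbi] at hbit
        have hbi' : Nat.testBit i'.val j.val = true := by simpa using hbit
        have h1 : Conn G (Sum.inl (L c i)) (Sum.inl (F c j)) P := by
          have := (conn_ends _ _ (Seg.Lbit c i j) (hne _) hP); rw [show ends m Sa Sb (Seg.Lbit c i j) = (L c i, F c j) by simp [ends, hbi]] at this; exact this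
        have h2 : Conn G (Sum.inl (F c j)) (Sum.inl (T' c j)) 1 :=
          conn_ends _ _ (Seg.FT' c j) (hne _) le_rfl
        have h3 : Conn G (Sum.inl (T' c j)) (Sum.inl (R c i')) P := by
          have := (conn_ends _ _ (Seg.Rbit c i' j) (hne _) hP).symm; rw [show ends m Sa Sb (Seg.Rbit c i' j) = (R c i', T' c j) by simp [ends, hbi']] at this; exact this
        exact ((((cL c).trans h1).trans h2).trans h3).of_le (by omega)
  have cF' : ∀ c j, Conn G l (Sum.inl (F' c j)) (4 * P + 1) := by
    intro c j
    cases hbi : Nat.testBit i.val j.val with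
    | true =>
      have h1 : Conn G (Sum.inl (L c i)) (Sum.inl (T c j)) P := by
        have := (conn_ends _ _ (Seg.Lbit c i j) (hne _) hP); rw [show ends m Sa Sb (Seg.Lbit c i j) = (L c i, T c j) by simp [ends, hbi]] at this; exact this
      have h2 : Conn G (Sum.inl (T c j)) (Sum.inl (F' c j)) 1 :=
        conn_ends _ _ (Seg.TF' c j) (hne _) le_rfl
      exact (((cL c).trans h1).trans h2).of_le (by omega)
    | false =>
      have h3 : Conn G (Sum.inl (R c i)) (Sum.inl (F' c j)) P := by
        have := (conn_ends _ _ (Seg.Rbit c i j) (hne _) hP); rw [show ends m Sa Sb (Seg.Rbit c i j) = (R c i, F' c j) by simp [ends, hbi]] at this; exact this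
      exact ((cR c i).trans h3).of_le (by omega)
  have cT' : ∀ c j, Conn G l (Sum.inl (T' c j)) (4 * P + 1) := by
    intro c j
    cases hbi : Nat.testBit i.val j.val with
    | false =>
      have h1 : Conn G (Sum.inl (L c i)) (Sum.inl (F c j)) P := by
        have := (conn_ends _ _ (Seg.Lbit c i j) (hne _) hP); rw [show ends m Sa Sb (Seg.Lbit c i j) = (L c i, F c j) by simp [ends, hbi]] at this; exact this
      have h2 : Conn G (Sum.inl (F c j)) (Sum.inl (T' c j)) 1 :=
        conn_ends _ _ (Seg.FT' c j) (hne _) le_rfl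
      exact (((cL c).trans h1).trans h2).of_le (by omega)
    | true =>
      have h3 : Conn G (Sum.inl (R c i)) (Sum.inl (T' c j)) P := by
        have := (conn_ends _ _ (Seg.Rbit c i j) (hne _) hP); rw [show ends m Sa Sb (Seg.Rbit c i j) = (R c i, T' c j) by simp [ends, hbi]] at this; exact this
      exact ((cR c i).trans h3).of_le (by omega)
  have cR' : ∀ c i', Conn G l (Sum.inl (R' c i')) (4 * P + 1) := fun c i' =>
    ((cR c i').trans ((conn_ends _ _ (Seg.R'R c i') (hne _) hP).symm)).of_le
      (show 3 * P + 1 + P ≤ 4 * P + 1 by omega)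
  intro v hv
  rcases v with h | ⟨s, t⟩
  · cases h with
    | R c i' => exact ((cR c i').of_le (by omega)).dist_le
    | R' c i' => exact (cR' c i').dist_le
    | F' c j => exact (cF' c j).dist_le
    | T' c j => exact (cT' c j).dist_le
    | rk c => exact ((cRk c).of_le (by omega)).dist_le
    | rk1 c => exact ((cRk1 c).of_le (by omega)).dist_le
    | L c i' => exact hv.elim
    | lk c => exact hv.elim
    | lk1 c => exact hv.elim
    | F c j => exact hv.elim
    | T c j => exact hv.elim
    | L' i' => exact hv.elim
  · cases s with
    | Rrk c i' =>
      have ht : (t : ℕ) < P - 1 := t.2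
      exact (((cR c i').trans (conn_fst_internal _ _ (Seg.Rrk c i') (hne _) t)).of_le
        (show 3 * P + 1 + ((t : ℕ) + 1) ≤ 4 * P + 1 by omega)).dist_le
    | rkrk1 c =>
      have ht : (t : ℕ) < 2 * P - 1 := t.2
      exact (((cRk1 c).trans (conn_snd_internal _ _ (Seg.rkrk1 c) (hne _) t)).of_le
        (show P + P + 1 + (2 * P - 1 - (t : ℕ)) ≤ 4 * P + 1 by omega)).dist_le
    | Rbit c i' j =>
      have ht : (t : ℕ) < P - 1 := t.2
      exact (((cR c i').trans (conn_fst_internal _ _ (Seg.Rbit c i' j) (hne _) t)).of_le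
        (show 3 * P + 1 + ((t : ℕ) + 1) ≤ 4 * P + 1 by omega)).dist_le
    | R'R c i' =>
      have ht : (t : ℕ) < P - 1 := t.2
      exact (((cR c i').trans (conn_snd_internal _ _ (Seg.R'R c i') (hne _) t)).of_le
        (show 3 * P + 1 + (P - 1 - (t : ℕ)) ≤ 4 * P + 1 by omega)).dist_le
    | Srk1 c i' hS =>
      have ht : (t : ℕ) < P - 1 := t.2
      exact (((cRk1 c).trans (conn_snd_internal _ _ (Seg.Srk1 c i' hS) (hne _) t)).of_le
        (show P + P + 1 + (P - 1 - (t : ℕ)) ≤ 4 * P + 1 by omega)).dist_le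
    | Llk c i' => exact hv.elim
    | lklk1 c => exact hv.elim
    | lk1rk1 c => exact hv.elim
    | Lbit c i' j => exact hv.elim
    | FT' c j => exact hv.elim
    | TF' c j => exact hv.elim
    | L'L c i' => exact hv.elim
    | Slk1 c i' hS => exact hv.elim

end RadApprox
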